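/- arXiv:2109.13559 — 6 statements merged into one kernel-verified Lean document; each statement's English description precedes it below -/
import Mathlib

section
/- Every solution of the system ẏ = (a - b·k)·y, k̇ = b·y² with initial condition (y₀, k₀) remains for all t ≥ t₀ in the closed ball centered at (0, (a+p)/b) of radius √(y₀² + (k₀ - (a+p)/b)²), for any p ≥ 0. -/
theorem solutions_in_closed_ball (a b p t₀ y₀ k₀ : ℝ) (hb : b ≠ 0) (hp : 0 ≤ p)
    (y k : ℝ → ℝ)
    (hy : ∀ t ≥ t₀, HasDerivAt y ((a - b * k t) * y t) t)
    (hk : ∀ t ≥ t₀, HasDerivAt k (b * (y t) ^ 2) t)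
    (hy0 : y t₀ = y₀) (hk0 : k t₀ = k₀) :
    ∀ t ≥ t₀,
      Real.sqrt ((y t - 0) ^ 2 + (k t - (a + p) / b) ^ 2)
        ≤ Real.sqrt (y₀ ^ 2 + (k₀ - (a + p) / b) ^ 2) := by
  set c : ℝ := (a + p) / b with hc
  set V : ℝ → ℝ := fun t => (y t) ^ 2 + (k t - c) ^ 2 with hVdef
  have hV : ∀ t ≥ t₀, HasDerivAt V (-(2 * p * (y t) ^ 2)) t := by
    intro t ht
    have h1 := ((hy t ht).fun_pow 2).add (((hk t ht).sub_const c).fun_pow 2)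
    refine h1.congr_deriv ?_
    have hbc : b * c = a + p := by rw [hc]; field_simp
    have h2 : b * c * y t ^ 2 = (a + p) * y t ^ 2 := by rw [hbc]
    push_cast
    nlinarith [hbc, h2]
  have hcont : ContinuousOn V (Set.Ici t₀) := fun t ht =>
    ((hV t ht).continuousAt).continuousWithinAt
  have hdiff : ∀ t ∈ interior (Set.Ici t₀), DifferentiableAt ℝ V t := by
    intro t ht
    rw [interior_Ici] at ht
    exact (hV t ht.le).differentiableAt
  have hderiv : ∀ t ∈ interior (Set.Ici t₀), deriv V t ≤ 0 := by
    intro t ht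
    rw [interior_Ici] at ht
    rw [(hV t ht.le).deriv]
    nlinarith [sq_nonneg (y t), hp]
  have hanti : AntitoneOn V (Set.Ici t₀) :=
    antitoneOn_of_deriv_nonpos (convex_Ici t₀) hcont (fun t ht => (hdiff t ht).differentiableWithinAt) hderiv
  intro t ht
  have hle : V t ≤ V t₀ := hanti (Set.mem_Ici.mpr le_rfl) ht ht
  rw [sub_zero]
  apply Real.sqrt_le_sqrt
  simpa [hVdef, hy0, hk0] using hle
end

section
/- For every p ≥ 0, the point (0, (a+p)/b) is a Lyapunov-stable equilibrium of the system ẏ = (a - b·k)·y, k̇ = b·y²: for every ε > 0 there exists δ > 0 such that any solution with initial condition within distance δ of (0, (a+p)/b) stays within distance ε of (0, (a+p)/b) for all future times. -/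
theorem lyapunov_stability (a b p : ℝ) (hb : b ≠ 0) (hp : 0 ≤ p) :
    ∀ ε > 0, ∃ δ > 0,
      ∀ (t₀ : ℝ) (y k : ℝ → ℝ),
        (∀ t ≥ t₀, HasDerivAt y ((a - b * k t) * y t) t) →
        (∀ t ≥ t₀, HasDerivAt k (b * (y t) ^ 2) t) →
        Real.sqrt ((y t₀) ^ 2 + (k t₀ - (a + p) / b) ^ 2) < δ →
        ∀ t ≥ t₀,
          Real.sqrt ((y t) ^ 2 + (k t - (a + p) / b) ^ 2) < ε := by
  intro ε hε
  refine ⟨ε, hε, ?_⟩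
  intro t₀ y k hy hk hinit t ht
  set c : ℝ := (a + p) / b with hc_def
  have hc : b * c = a + p := by rw [hc_def]; field_simp
  set V : ℝ → ℝ := fun s => (y s) ^ 2 + (k s - c) ^ 2 with hV
  have hV' : ∀ s ∈ Set.Ici t₀, HasDerivAt V (-(2 * p) * (y s) ^ 2) s := by
    intro s hs
    have h1 := hy s hs
    have h2 := hk s hs
    have hD : HasDerivAt V
        (2 * y s ^ 1 * ((a - b * k s) * y s) + 2 * (k s - c) ^ 1 * (b * (y s) ^ 2)) s := by
      have := (h1.pow 2).add ((h2.sub_const c).pow 2)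
      exact this.congr_deriv (by norm_num)
    convert hD using 1
    simp only [pow_one, hc_def]
    field_simp
    ring
  have hanti : AntitoneOn V (Set.Ici t₀) := by
    apply antitoneOn_of_deriv_nonpos (convex_Ici t₀)
    · exact fun s hs => ((hV' s hs).differentiableAt).continuousAt.continuousWithinAt
    · intro s hs
      rw [interior_Ici] at hs
      exact ((hV' s (Set.Ioi_subset_Ici_self hs)).differentiableAt).differentiableWithinAt
    · intro s hs
      rw [interior_Ici] at hs
      rw [(hV' s (Set.Ioi_subset_Ici_self hs)).deriv]
      nlinarith [sq_nonneg (y s)]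
  have hle : V t ≤ V t₀ := hanti (Set.mem_Ici.mpr le_rfl) ht ht
  calc Real.sqrt ((y t) ^ 2 + (k t - c) ^ 2) ≤ Real.sqrt ((y t₀) ^ 2 + (k t₀ - c) ^ 2) :=
        Real.sqrt_le_sqrt hle
    _ < ε := hinit
end

section
/- Suppose b > 0 and (y₀, k₀) ∈ ℝ² with y₀ ≠ 0. Let c₀ = a/b and d₀ = √(y₀² + (k₀ - c₀)²). Then any global solution (y(t), k(t)) of ẏ = (a - b·k)·y, k̇ = b·y² with (y(t₀), k(t₀)) = (y₀, k₀) satisfies lim_{t→∞} (y(t), k(t)) = (0, c₀ + d₀). -/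
open Filter Real Set

theorem convergence_limit (a b t₀ y₀ k₀ : ℝ) (hb : 0 < b) (hy₀ : y₀ ≠ 0)
    (y k : ℝ → ℝ)
    (hy : ∀ t ≥ t₀, HasDerivAt y ((a - b * k t) * y t) t)
    (hk : ∀ t ≥ t₀, HasDerivAt k (b * (y t) ^ 2) t)
    (hi1 : y t₀ = y₀) (hi2 : k t₀ = k₀) :
    Filter.Tendsto (fun t => (y t, k t)) Filter.atTop
      (nhds ((0 : ℝ), a / b + Real.sqrt (y₀ ^ 2 + (k₀ - a / b) ^ 2))) := by
  have hb' : b ≠ 0 := ne_of_gt hb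
  set c : ℝ := a / b with hc
  set d : ℝ := Real.sqrt (y₀ ^ 2 + (k₀ - c) ^ 2) with hd
  have hy2 : 0 < y₀ ^ 2 := by positivity
  have hd0 : 0 ≤ d := Real.sqrt_nonneg _
  have hd2 : d ^ 2 = y₀ ^ 2 + (k₀ - c) ^ 2 := Real.sq_sqrt (by positivity)
  have hk0d : (k₀ - c) ^ 2 < d ^ 2 := by rw [hd2]; linarith
  have hk0d1 : k₀ - c < d := by nlinarith
  have hk0d2 : c - k₀ < d := by nlinarith
  have hcy : ContinuousOn y (Ici t₀) := fun t ht => (hy t ht).continuousAt.continuousWithinAt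
  have hck : ContinuousOn k (Ici t₀) := fun t ht => (hk t ht).continuousAt.continuousWithinAt
  -- constancy of the "radius"
  have hr : ∀ t ≥ t₀, y t ^ 2 + (k t - c) ^ 2 = d ^ 2 := by
    intro t ht
    have key := constant_of_has_deriv_right_zero
      (f := fun s => y s ^ 2 + (k s - c) ^ 2) (a := t₀) (b := t)
      (by
        apply ContinuousOn.add
        · exact (hcy.mono (Icc_subset_Ici_self)).pow 2
        · exact ((hck.mono (Icc_subset_Ici_self)).sub continuousOn_const).pow 2)
      (by
        intro x hx
        have hx' : t₀ ≤ x := hx.1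
        have h1 := ((hy x hx').pow 2).add (((hk x hx').sub_const c).pow 2)
        norm_num at h1
        have h0 : 2 * y x * ((a - b * k x) * y x) +
            2 * (k x - c) * (b * y x ^ 2) = 0 := by
          simp only [hc]
          field_simp
          ring
        rw [h0] at h1
        exact h1.hasDerivWithinAt)
    have := key t ⟨le_refl t₀ |>.trans ht, le_refl t⟩
    rw [this, hi1, hi2, hd2]
  -- k is monotone on [t₀, ∞)
  have hmono : MonotoneOn k (Ici t₀) := by
    apply monotoneOn_of_deriv_nonneg (convex_Ici t₀) hck
    · intro x hx
      rw [interior_Ici] at hx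
      exact (hk x hx.le).differentiableAt.differentiableWithinAt
    · intro x hx
      rw [interior_Ici] at hx
      rw [(hk x hx.le).deriv]
      positivity
  -- k is bounded above by c + d
  have hbound : ∀ t ≥ t₀, k t ≤ c + d := by
    intro t ht
    have h1 : (k t - c) ^ 2 ≤ d ^ 2 := by
      have := hr t ht
      nlinarith [sq_nonneg (y t)]
    nlinarith
  -- the limit of k
  set K : ℝ → ℝ := fun t => k (max t t₀) with hK
  have hKmono : Monotone K := fun s t hst =>
    hmono (le_max_right s t₀) (le_max_right t t₀) (max_le_max hst le_rfl)
  have hKbdd : BddAbove (Set.range K) :=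
    ⟨c + d, by rintro _ ⟨t, rfl⟩; exact hbound _ (le_max_right t t₀)⟩
  set L : ℝ := ⨆ t, K t with hL
  clear_value L
  have hKtendsto : Tendsto K atTop (nhds L) := hL ▸ tendsto_atTop_ciSup hKmono hKbdd
  have hEq : ∀ᶠ t in atTop, K t = k t := by
    filter_upwards [eventually_ge_atTop t₀] with t ht
    simp [hK, max_eq_left ht]
  have hktendsto : Tendsto k atTop (nhds L) := hKtendsto.congr' hEq
  have hkleL : ∀ t ≥ t₀, k t ≤ L := by
    intro t ht
    have h1 : K t ≤ L := hL ▸ le_ciSup hKbdd t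
    simpa [hK, max_eq_left ht] using h1
  have hk0L : k₀ ≤ L := by
    have := hkleL t₀ le_rfl; rwa [hi2] at this
  have hLle : L ≤ c + d := hL ▸ ciSup_le fun t => hbound _ (le_max_right t t₀)
  have hLge : L = c + d := by
    by_contra hne
    have hLlt : L < c + d := lt_of_le_of_ne hLle hne
    set ε : ℝ := d ^ 2 - max ((k₀ - c) ^ 2) ((L - c) ^ 2) with hε
    clear_value ε
    have hMlt : max ((k₀ - c) ^ 2) ((L - c) ^ 2) < d ^ 2 := by
      apply max_lt hk0d
      nlinarith
    have hε0 : 0 < ε := by rw [hε]; linarith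
    have hylb : ∀ t ≥ t₀, ε ≤ y t ^ 2 := by
      intro t ht
      have h1 := hr t ht
      have h2 : k₀ ≤ k t := by rw [← hi2]; exact hmono self_mem_Ici ht ht
      have h3 : k t ≤ L := hkleL t ht
      have h4 : (k t - c) ^ 2 ≤ max ((k₀ - c) ^ 2) ((L - c) ^ 2) := by
        rcases le_total (k t) c with h | h
        · exact le_max_of_le_left (by nlinarith)
        · exact le_max_of_le_right (by nlinarith)
      rw [hε]; linarith
    have hgmono : MonotoneOn (fun t => k t - b * ε * t) (Ici t₀) := by
      apply monotoneOn_of_deriv_nonneg (convex_Ici t₀)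
      · exact hck.sub (continuous_const.mul continuous_id).continuousOn
      · intro x hx
        rw [interior_Ici] at hx
        exact ((hk x hx.le).sub
          ((hasDerivAt_id' x).const_mul (b * ε))).differentiableAt.differentiableWithinAt
      · intro x hx
        rw [interior_Ici] at hx
        have hdx := (hk x hx.le).sub ((hasDerivAt_id' x).const_mul (b * ε))
        rw [show (fun t => k t - b * ε * t) = (k - fun y => b * ε * y) from rfl, hdx.deriv]
        have := hylb x hx.le
        nlinarith
    set T : ℝ := t₀ + (c + d - k₀) / (b * ε) + 1 with hT
    clear_value T
    have hq0 : 0 ≤ (c + d - k₀) / (b * ε) := by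
      apply div_nonneg (by linarith) (by positivity)
    have hT0 : t₀ ≤ T := by rw [hT]; linarith
    have hg := hgmono self_mem_Ici (show T ∈ Ici t₀ from hT0) hT0
    simp only [hi2] at hg
    have hkT : k₀ + b * ε * (T - t₀) ≤ k T := by linarith
    have hkTb : k T ≤ c + d := hbound T hT0
    have h1 : b * ε * ((c + d - k₀) / (b * ε)) = c + d - k₀ := by
      field_simp
    have hTt : T - t₀ = (c + d - k₀) / (b * ε) + 1 := by rw [hT]; ring
    have hbe : 0 < b * ε := mul_pos hb hε0
    have hbig : c + d < k₀ + b * ε * (T - t₀) := by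
      rw [hTt, mul_add, h1, mul_one]
      linarith
    linarith
  have hytendsto : Tendsto y atTop (nhds 0) := by
    have hsq : Tendsto (fun t => y t ^ 2) atTop (nhds 0) := by
      have h1 : Tendsto (fun t => d ^ 2 - (k t - c) ^ 2) atTop
          (nhds (d ^ 2 - (L - c) ^ 2)) :=
        Tendsto.sub tendsto_const_nhds ((hktendsto.sub_const c).pow 2)
      have heq : d ^ 2 - (L - c) ^ 2 = 0 := by rw [hLge]; ring
      rw [heq] at h1
      apply h1.congr'
      filter_upwards [eventually_ge_atTop t₀] with t ht
      have := hr t ht; linarith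
    rw [tendsto_zero_iff_abs_tendsto_zero]
    have habs : (abs ∘ y) = fun t => Real.sqrt (y t ^ 2) := by
      funext t; simp [Real.sqrt_sq_eq_abs]
    rw [habs]
    have h2 := (Real.continuous_sqrt.tendsto 0).comp hsq
    simpa [Function.comp_def] using h2
  have hfinal := hytendsto.prodMk_nhds hktendsto
  rw [hLge] at hfinal
  exact hfinal
end

section
/- For every d > 0, the system r' = 0, φ' = b·r·cos φ with initial condition r(t₀) = d, φ(t₀) = φ₀ with cos φ₀ > 0 and b > 0 has the property that φ(t) converges monotonically to the smallest solution of cos φ = 0 above φ₀, i.e., φ(t) → π/2 + 2πm where m is the unique integer with φ₀ ∈ (-π/2 + 2πm, π/2 + 2πm). -/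
open Real Set Filter

private lemma mono_aux {t₀ : ℝ} {f f' : ℝ → ℝ}
    (hf : ∀ t ≥ t₀, HasDerivAt f (f' t) t)
    (h0 : ∀ t ≥ t₀, 0 ≤ f' t) : MonotoneOn f (Set.Ici t₀) := by
  apply monotoneOn_of_deriv_nonneg (convex_Ici t₀)
  · exact fun t ht => (hf t ht).continuousAt.continuousWithinAt
  · rw [interior_Ici]
    exact fun t ht => (hf t (le_of_lt ht)).differentiableAt.differentiableWithinAt
  · rw [interior_Ici]
    intro t ht
    rw [(hf t ht.le).deriv]
    exact h0 t ht.le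

theorem phi_converges (b d t₀ φ₀ : ℝ) (hb : 0 < b) (hd : 0 < d)
    (φ : ℝ → ℝ)
    (hφ : ∀ t ≥ t₀, HasDerivAt φ (b * d * Real.cos (φ t)) t)
    (hφ0 : φ t₀ = φ₀) (hcos : 0 < Real.cos φ₀)
    (m : ℤ)
    (hm : φ₀ ∈ Set.Ioo (-(Real.pi / 2) + 2 * Real.pi * m) (Real.pi / 2 + 2 * Real.pi * m)) :
    MonotoneOn φ (Set.Ici t₀) ∧
    Filter.Tendsto φ Filter.atTop (nhds (Real.pi / 2 + 2 * Real.pi * m)) := by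
  set a : ℝ := -(Real.pi / 2) + 2 * Real.pi * m with ha
  set c : ℝ := Real.pi / 2 + 2 * Real.pi * m with hc
  obtain ⟨hma, hmc⟩ := hm
  have hbd : 0 < b * d := mul_pos hb hd
  -- sin at the endpoints
  have hsinc : Real.sin c = 1 := by
    have : c = Real.pi / 2 + (m : ℝ) * (2 * Real.pi) := by rw [hc]; ring
    rw [this, Real.sin_add_int_mul_two_pi, Real.sin_pi_div_two]
  have hsina : Real.sin a = -1 := by
    have : a = -(Real.pi / 2) + (m : ℝ) * (2 * Real.pi) := by rw [ha]; ring
    rw [this, Real.sin_add_int_mul_two_pi, Real.sin_neg, Real.sin_pi_div_two]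
  -- sin φ₀ strictly inside (-1, 1)
  have hs0 : Real.sin φ₀ < 1 ∧ -1 < Real.sin φ₀ := by
    have h1 := Real.sin_sq_add_cos_sq φ₀
    have h2 := Real.neg_one_le_sin φ₀
    have h3 := Real.sin_le_one φ₀
    constructor <;> nlinarith
  -- derivative of sin ∘ φ
  have hu : ∀ t ≥ t₀, HasDerivAt (fun t => Real.sin (φ t))
      (Real.cos (φ t) * (b * d * Real.cos (φ t))) t := by
    intro t ht
    exact (Real.hasDerivAt_sin (φ t)).comp t (hφ t ht)
  -- the exponential factor
  have hE : ∀ t : ℝ, HasDerivAt (fun t => Real.exp (2 * (b * d) * (t - t₀)))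
      (Real.exp (2 * (b * d) * (t - t₀)) * (2 * (b * d))) t := by
    intro t
    have h1 : HasDerivAt (fun t : ℝ => 2 * (b * d) * (t - t₀)) (2 * (b * d)) t := by
      simpa using ((hasDerivAt_id t).sub_const t₀).const_mul (2 * (b * d))
    simpa using h1.exp
  -- upper bound: sin (φ t) < 1 for t ≥ t₀
  have hup : ∀ t ≥ t₀, Real.sin (φ t) < 1 := by
    have hmonoh : MonotoneOn
        (fun t => (1 - Real.sin (φ t)) * Real.exp (2 * (b * d) * (t - t₀))) (Set.Ici t₀) := by
      apply mono_aux (f' := fun t =>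
        -(Real.cos (φ t) * (b * d * Real.cos (φ t))) * Real.exp (2 * (b * d) * (t - t₀))
        + (1 - Real.sin (φ t)) * (Real.exp (2 * (b * d) * (t - t₀)) * (2 * (b * d))))
      · intro t ht
        exact (((hasDerivAt_const t (1 : ℝ)).sub (hu t ht)).mul (hE t)).congr_deriv (by simp only [Pi.sub_apply, Pi.add_apply]; ring)
      · intro t ht
        have h1 := Real.sin_sq_add_cos_sq (φ t)
        have key : -(Real.cos (φ t) * (b * d * Real.cos (φ t))) * Real.exp (2 * (b * d) * (t - t₀))
            + (1 - Real.sin (φ t)) * (Real.exp (2 * (b * d) * (t - t₀)) * (2 * (b * d)))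
            = Real.exp (2 * (b * d) * (t - t₀)) * (b * d) * (1 - Real.sin (φ t)) ^ 2 := by
          linear_combination (-(Real.exp (2 * (b * d) * (t - t₀))) * (b * d)) * h1
        rw [key]
        positivity
    intro t ht
    have h0 := hmonoh ((Set.mem_Ici.2 le_rfl)) ht ht
    simp only [sub_self, mul_zero, Real.exp_zero, mul_one, hφ0] at h0
    have h2 := Real.exp_pos (2 * (b * d) * (t - t₀))
    nlinarith [hs0.1]
  -- lower bound: -1 < sin (φ t) for t ≥ t₀
  have hlo : ∀ t ≥ t₀, -1 < Real.sin (φ t) := by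
    have hmonoh : MonotoneOn
        (fun t => (1 + Real.sin (φ t)) * Real.exp (2 * (b * d) * (t - t₀))) (Set.Ici t₀) := by
      apply mono_aux (f' := fun t =>
        (Real.cos (φ t) * (b * d * Real.cos (φ t))) * Real.exp (2 * (b * d) * (t - t₀))
        + (1 + Real.sin (φ t)) * (Real.exp (2 * (b * d) * (t - t₀)) * (2 * (b * d))))
      · intro t ht
        exact (((hasDerivAt_const t (1 : ℝ)).add (hu t ht)).mul (hE t)).congr_deriv (by simp only [Pi.sub_apply, Pi.add_apply]; ring)
      · intro t ht
        have h1 := Real.sin_sq_add_cos_sq (φ t)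
        have h2 := Real.exp_pos (2 * (b * d) * (t - t₀))
        have h3 := Real.neg_one_le_sin (φ t)
        have h4 := Real.sin_le_one (φ t)
        have key : Real.cos (φ t) * (b * d * Real.cos (φ t)) * Real.exp (2 * (b * d) * (t - t₀))
            + (1 + Real.sin (φ t)) * (Real.exp (2 * (b * d) * (t - t₀)) * (2 * (b * d)))
            = Real.exp (2 * (b * d) * (t - t₀)) * (b * d)
              * ((1 + Real.sin (φ t)) * (3 - Real.sin (φ t))) := by
          linear_combination (Real.exp (2 * (b * d) * (t - t₀)) * (b * d)) * h1
        rw [key]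
        exact mul_nonneg (mul_nonneg h2.le hbd.le)
          (mul_nonneg (by linarith) (by linarith))
    intro t ht
    have h0 := hmonoh ((Set.mem_Ici.2 le_rfl)) ht ht
    simp only [sub_self, mul_zero, Real.exp_zero, mul_one, hφ0] at h0
    have h2 := Real.exp_pos (2 * (b * d) * (t - t₀))
    nlinarith [hs0.2]
  -- continuity of φ on intervals
  have hcont : ∀ t ≥ t₀, ContinuousOn φ (Set.Icc t₀ t) := by
    intro t _
    exact fun s hs => ((hφ s hs.1).continuousAt).continuousWithinAt
  -- φ stays in (a, c)
  have hmem : ∀ t ≥ t₀, φ t ∈ Set.Ioo a c := by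
    intro t ht
    constructor
    · by_contra hcon
      push_neg at hcon
      have hIVT := intermediate_value_Icc' ht (hcont t ht)
      have haIcc : a ∈ Set.Icc (φ t) (φ t₀) := ⟨hcon, by rw [hφ0]; linarith⟩
      obtain ⟨s, hs, hφs⟩ := hIVT haIcc
      have := hlo s hs.1
      rw [hφs, hsina] at this
      exact lt_irrefl _ this
    · by_contra hcon
      push_neg at hcon
      have hIVT := intermediate_value_Icc ht (hcont t ht)
      have hcIcc : c ∈ Set.Icc (φ t₀) (φ t) := ⟨by rw [hφ0]; linarith, hcon⟩
      obtain ⟨s, hs, hφs⟩ := hIVT hcIcc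
      have := hup s hs.1
      rw [hφs, hsinc] at this
      exact lt_irrefl _ this
  -- cos is positive on (a, c)
  have hcosIoo : ∀ x ∈ Set.Ioo a c, 0 < Real.cos x := by
    intro x hx
    have h1 : Real.cos x = Real.cos (x - (m : ℝ) * (2 * Real.pi)) :=
      (Real.cos_sub_int_mul_two_pi x m).symm
    rw [h1]
    apply Real.cos_pos_of_mem_Ioo
    constructor
    · have := hx.1; rw [ha] at this; linarith
    · have := hx.2; rw [hc] at this; linarith
  have hcospos : ∀ t ≥ t₀, 0 < Real.cos (φ t) := fun t ht => hcosIoo _ (hmem t ht)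
  -- monotonicity
  have hmono : MonotoneOn φ (Set.Ici t₀) :=
    mono_aux hφ (fun t ht => (mul_pos hbd (hcospos t ht)).le)
  refine ⟨hmono, ?_⟩
  -- the auxiliary globally monotone function
  set ψ : ℝ → ℝ := fun t => φ (max t t₀) with hψ
  have hψmono : Monotone ψ := by
    intro s t hst
    exact hmono (Set.mem_Ici.2 (le_max_right s t₀)) (Set.mem_Ici.2 (le_max_right t t₀))
      (max_le_max hst le_rfl)
  have hbdd : BddAbove (Set.range ψ) := by
    refine ⟨c, ?_⟩
    rintro x ⟨t, rfl⟩
    exact (hmem _ (le_max_right t t₀)).2.le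
  have htend : Filter.Tendsto ψ Filter.atTop (nhds (⨆ t, ψ t)) :=
    tendsto_atTop_ciSup hψmono hbdd
  set L : ℝ := ⨆ t, ψ t with hL
  have hψeq : ∀ t ≥ t₀, ψ t = φ t := by
    intro t ht
    simp only [hψ, max_eq_left ht]
  have hphiL : ∀ t ≥ t₀, φ t ≤ L := by
    intro t ht
    rw [← hψeq t ht]
    exact le_ciSup hbdd t
  have hLle : L ≤ c := ciSup_le fun t => (hmem _ (le_max_right t t₀)).2.le
  have hLc : L = c := by
    by_contra hne
    have hlt : L < c := lt_of_le_of_ne hLle hne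
    have hφ0L : φ₀ ≤ L := by rw [← hφ0]; exact hphiL t₀ le_rfl
    -- minimum of cos on [φ₀, L]
    obtain ⟨x₀, hx₀mem, hx₀min⟩ := isCompact_Icc.exists_isMinOn (Set.nonempty_Icc.2 hφ0L)
      (Real.continuous_cos.continuousOn)
    have hx₀Ioo : x₀ ∈ Set.Ioo a c := ⟨lt_of_lt_of_le hma hx₀mem.1, lt_of_le_of_lt hx₀mem.2 hlt⟩
    have hε : 0 < Real.cos x₀ := hcosIoo _ hx₀Ioo
    set ε : ℝ := Real.cos x₀ with hεdef
    -- φ t ∈ [φ₀, L] for t ≥ t₀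
    have hφIcc : ∀ t ≥ t₀, φ t ∈ Set.Icc φ₀ L := by
      intro t ht
      refine ⟨?_, hphiL t ht⟩
      rw [← hφ0]
      exact hmono (Set.mem_Ici.2 le_rfl) ht ht
    -- growth: φ t - b*d*ε*t is monotone
    have hg : MonotoneOn (fun t => φ t - b * d * ε * t) (Set.Ici t₀) := by
      apply mono_aux (f' := fun t => b * d * Real.cos (φ t) - b * d * ε)
      · intro t ht
        have h1 : HasDerivAt (fun t : ℝ => b * d * ε * t) (b * d * ε) t := by
          simpa using (hasDerivAt_id t).const_mul (b * d * ε)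
        exact (hφ t ht).sub h1
      · intro t ht
        have := hx₀min (hφIcc t ht)
        have hεle : ε ≤ Real.cos (φ t) := this
        nlinarith
    -- pick a large time to get a contradiction
    set T : ℝ := t₀ + (L - φ₀ + 1) / (b * d * ε) with hT
    have hbdε : 0 < b * d * ε := mul_pos hbd hε
    have hTge : t₀ ≤ T := by
      rw [hT]
      have : 0 < (L - φ₀ + 1) / (b * d * ε) := div_pos (by linarith) hbdε
      linarith
    have h1 := hg (Set.mem_Ici.2 le_rfl) hTge hTge
    have h2 : b * d * ε * T - b * d * ε * t₀ = L - φ₀ + 1 := by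
      rw [hT]
      field_simp
      ring
    have h3 := hphiL T hTge
    have h1' : φ t₀ - b * d * ε * t₀ ≤ φ T - b * d * ε * T := h1
    rw [hφ0] at h1'
    linarith
  rw [← hLc]
  apply htend.congr'
  filter_upwards [eventually_ge_atTop t₀] with t ht using hψeq t ht
end

section
/- For any a ∈ ℝ and b ≠ 0, and any initial condition (y₀, k₀) ∈ ℝ², the system ẏ = (a - b·k)·y, k̇ = b·y² admits a unique solution defined on all of [t₀, ∞). -/
open Set


lemma conserved_aux (a b t₀ : ℝ) (hb : b ≠ 0) (y k : ℝ → ℝ)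
    (hy : ∀ t ≥ t₀, HasDerivAt y ((a - b * k t) * y t) t)
    (hk : ∀ t ≥ t₀, HasDerivAt k (b * (y t) ^ 2) t) :
    ∀ t ≥ t₀, y t ^ 2 + (k t - a / b) ^ 2 = y t₀ ^ 2 + (k t₀ - a / b) ^ 2 := by
  intro t ht
  have key : ∀ s ∈ Icc t₀ t,
      (fun u => y u ^ 2 + (k u - a / b) ^ 2) s
        = (fun u => y u ^ 2 + (k u - a / b) ^ 2) t₀ := by
    apply constant_of_has_deriv_right_zero
    · intro s hs
      exact (((hy s hs.1).continuousAt.pow 2).add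
        (((hk s hs.1).continuousAt.sub continuousAt_const).pow 2)).continuousWithinAt
    · intro s hs
      have h1 := (hy s hs.1).pow 2
      have h2 := ((hk s hs.1).sub_const (a / b)).pow 2
      have h := h1.add h2
      have : ((2:ℕ) : ℝ) * y s ^ (2 - 1) * ((a - b * k s) * y s)
          + ((2:ℕ) : ℝ) * (k s - a / b) ^ (2 - 1) * (b * y s ^ 2) = 0 := by
        push_cast; field_simp; ring
      rw [this] at h
      exact h.hasDerivWithinAt
  exact key t (right_mem_Icc.2 ht)


lemma lip_aux (a b r : ℝ) (hr : 0 ≤ r) :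
    LipschitzOnWith (|a| + |b| * |a / b| + 2 * |b| * r).toNNReal
      (fun p : ℝ × ℝ => ((a - b * p.2) * p.1, b * p.1 ^ 2))
      (Metric.closedBall ((0 : ℝ), a / b) r) := by
  have hK0 : (0:ℝ) ≤ |a| + |b| * |a / b| + 2 * |b| * r := by positivity
  rw [lipschitzOnWith_iff_dist_le_mul]
  intro p hp q hq
  rw [Real.coe_toNNReal _ hK0]
  set Kr : ℝ := |a| + |b| * |a / b| + 2 * |b| * r with hKr
  set d : ℝ := dist p q with hd
  have hd0 : 0 ≤ d := dist_nonneg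
  have hp' := Metric.mem_closedBall.1 hp
  have hq' := Metric.mem_closedBall.1 hq
  rw [Prod.dist_eq, max_le_iff, Real.dist_eq, Real.dist_eq, sub_zero] at hp' hq'
  have hdy : |p.1 - q.1| ≤ d := by
    rw [hd, Prod.dist_eq, Real.dist_eq]; exact le_max_left _ _
  have hdk : |p.2 - q.2| ≤ d := by
    rw [hd, Prod.dist_eq, Real.dist_eq]; exact le_max_right _ _
  have hp2 : |p.2| ≤ |a / b| + r := by
    calc |p.2| = |(p.2 - a / b) + a / b| := by ring_nf
    _ ≤ |p.2 - a / b| + |a / b| := abs_add_le _ _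
    _ ≤ |a / b| + r := by linarith [hp'.2]
  have hA : |a - b * p.2| ≤ |a| + |b| * (|a / b| + r) := by
    calc |a - b * p.2| ≤ |a| + |b * p.2| := abs_sub _ _
    _ = |a| + |b| * |p.2| := by rw [abs_mul]
    _ ≤ |a| + |b| * (|a / b| + r) :=
      by have := mul_le_mul_of_nonneg_left hp2 (abs_nonneg b); linarith
  rw [Prod.dist_eq, max_le_iff, Real.dist_eq, Real.dist_eq]
  constructor
  · have e1 : (a - b * p.2) * p.1 - (a - b * q.2) * q.1
        = (a - b * p.2) * (p.1 - q.1) - (b * q.1) * (p.2 - q.2) := by ring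
    calc |(a - b * p.2) * p.1 - (a - b * q.2) * q.1|
        = |(a - b * p.2) * (p.1 - q.1) - (b * q.1) * (p.2 - q.2)| := by rw [e1]
      _ ≤ |(a - b * p.2) * (p.1 - q.1)| + |(b * q.1) * (p.2 - q.2)| := abs_sub _ _
      _ = |a - b * p.2| * |p.1 - q.1| + |b| * |q.1| * |p.2 - q.2| := by
          rw [abs_mul, abs_mul, abs_mul]
      _ ≤ (|a| + |b| * (|a / b| + r)) * d + |b| * r * d := by
          have h1 : |a - b * p.2| * |p.1 - q.1| ≤ (|a| + |b| * (|a / b| + r)) * d :=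
            mul_le_mul hA hdy (abs_nonneg _) (by positivity)
          have h2 : |b| * |q.1| * |p.2 - q.2| ≤ |b| * r * d :=
            mul_le_mul (mul_le_mul_of_nonneg_left hq'.1 (abs_nonneg b)) hdk (abs_nonneg _)
              (by positivity)
          linarith
      _ = Kr * d := by rw [hKr]; ring
  · have e2 : b * p.1 ^ 2 - b * q.1 ^ 2 = (b * (p.1 + q.1)) * (p.1 - q.1) := by ring
    calc |b * p.1 ^ 2 - b * q.1 ^ 2| = |b| * |p.1 + q.1| * |p.1 - q.1| := by
          rw [e2, abs_mul, abs_mul]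
      _ ≤ |b| * (2 * r) * d := by
          have h3 : |p.1 + q.1| ≤ 2 * r := by
            calc |p.1 + q.1| ≤ |p.1| + |q.1| := abs_add_le _ _
            _ ≤ 2 * r := by linarith [hp'.1, hq'.1]
          exact mul_le_mul (mul_le_mul_of_nonneg_left h3 (abs_nonneg b)) hdy (abs_nonneg _)
            (by positivity)
      _ ≤ Kr * d := by
          have : (0:ℝ) ≤ (|a| + |b| * |a / b|) * d := by positivity
          rw [hKr]; nlinarith


lemma exists_sol (a b t₀ y₀ k₀ : ℝ) (hb : b ≠ 0) :
    ∃ y k : ℝ → ℝ, y t₀ = y₀ ∧ k t₀ = k₀ ∧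
      (∀ t, HasDerivAt y ((a - b * k t) * y t) t) ∧
      (∀ t, HasDerivAt k (b * (y t) ^ 2) t) := by
  obtain ⟨u₀, hu₀⟩ : ∃ u : ℝ, u = k₀ - a / b := ⟨_, rfl⟩
  set r : ℝ := Real.sqrt (y₀ ^ 2 + u₀ ^ 2) with hrdef
  have hr0 : 0 ≤ r := Real.sqrt_nonneg _
  have hr2 : r ^ 2 = y₀ ^ 2 + u₀ ^ 2 := Real.sq_sqrt (by positivity)
  obtain ⟨α, hαr, hα1⟩ : ∃ α : ℝ, α * r = u₀ ∧ |α| ≤ 1 := by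
    rcases eq_or_ne r 0 with h | h
    · have hu : u₀ = 0 := by nlinarith [sq_nonneg y₀]
      exact ⟨0, by simp [hu], by simp⟩
    · have hrpos : 0 < r := lt_of_le_of_ne hr0 (Ne.symm h)
      refine ⟨u₀ / r, by field_simp, ?_⟩
      have hu : |u₀| ≤ r := by
        rw [← Real.sqrt_sq_eq_abs, ← Real.sqrt_sq hr0]
        exact Real.sqrt_le_sqrt (by nlinarith [sq_nonneg y₀])
      rw [abs_div, abs_of_pos hrpos, div_le_one hrpos]
      exact hu
  set x : ℝ → ℝ := fun t => b * r * (t - t₀) with hxdef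
  set D : ℝ → ℝ := fun t => Real.cosh (x t) + α * Real.sinh (x t) with hDdef
  set N : ℝ → ℝ := fun t => u₀ * Real.cosh (x t) + r * Real.sinh (x t) with hNdef
  have hD : ∀ t, 0 < D t := by
    intro t
    have h1 := Real.cosh_eq (x t)
    have h2 := Real.sinh_eq (x t)
    have e1 := Real.exp_pos (x t)
    have e2 := Real.exp_pos (-(x t))
    have hα := abs_le.1 hα1
    show 0 < Real.cosh (x t) + α * Real.sinh (x t)
    rw [h1, h2]
    rcases le_or_gt α 0 with h | h
    · have h3 : 1 * Real.exp (-(x t)) ≤ (1 - α) * Real.exp (-(x t)) :=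
        mul_le_mul_of_nonneg_right (by linarith) e2.le
      nlinarith
    · have h3 : 1 * Real.exp (x t) ≤ (1 + α) * Real.exp (x t) :=
        mul_le_mul_of_nonneg_right (by linarith) e1.le
      nlinarith
  have hDne : ∀ t, D t ≠ 0 := fun t => (hD t).ne'
  have hx : ∀ t, HasDerivAt x (b * r) t := by
    intro t
    simpa using ((hasDerivAt_id t).sub_const t₀).const_mul (b * r)
  have hD' : ∀ t, HasDerivAt D (b * N t) t := by
    intro t
    have h : HasDerivAt D _ t := (hx t).cosh.add (((hx t).sinh).const_mul α)
    convert h using 1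
    show b * (u₀ * Real.cosh (x t) + r * Real.sinh (x t))
      = Real.sinh (x t) * (b * r) + α * (Real.cosh (x t) * (b * r))
    linear_combination (-(b * Real.cosh (x t))) * hαr
  have hN' : ∀ t, HasDerivAt N
      (b * r * (u₀ * Real.sinh (x t) + r * Real.cosh (x t))) t := by
    intro t
    have h : HasDerivAt N _ t := ((hx t).cosh.const_mul u₀).add (((hx t).sinh).const_mul r)
    convert h using 1
    ring
  refine ⟨fun t => y₀ / D t, fun t => a / b + N t / D t, ?_, ?_, ?_, ?_⟩
  · have hx0 : x t₀ = 0 := by simp [hxdef]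
    simp [hDdef, hx0]
  · have hx0 : x t₀ = 0 := by simp [hxdef]
    simp [hNdef, hDdef, hx0, hu₀]
  · intro t
    have h : HasDerivAt (fun t => y₀ / D t) _ t := (hasDerivAt_const t y₀).div (hD' t) (hDne t)
    convert h using 1
    field_simp
    ring
  · intro t
    have h : HasDerivAt (fun t => a / b + N t / D t) _ t :=
      ((hN' t).div (hD' t) (hDne t)).const_add (a / b)
    have key : b * r * (u₀ * Real.sinh (x t) + r * Real.cosh (x t)) * D t
        - N t * (b * N t) = b * y₀ ^ 2 := by
      have hcs := Real.cosh_sq_sub_sinh_sq (x t)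
      show b * r * (u₀ * Real.sinh (x t) + r * Real.cosh (x t))
          * (Real.cosh (x t) + α * Real.sinh (x t))
        - (u₀ * Real.cosh (x t) + r * Real.sinh (x t))
          * (b * (u₀ * Real.cosh (x t) + r * Real.sinh (x t))) = b * y₀ ^ 2
      linear_combination b * hr2 + b * (r ^ 2 - u₀ ^ 2) * hcs
        + b * (u₀ * Real.sinh (x t) ^ 2 + r * Real.sinh (x t) * Real.cosh (x t)) * hαr
    convert h using 1
    rw [eq_div_iff (pow_ne_zero 2 (hDne t)), key]
    calc b * (y₀ / D t) ^ 2 * D t ^ 2 = b * (y₀ ^ 2 / D t ^ 2 * D t ^ 2) := by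
          rw [div_pow]; ring
      _ = b * y₀ ^ 2 := by rw [div_mul_cancel₀ _ (pow_ne_zero 2 (hDne t))]

theorem existence_uniqueness (a b t₀ y₀ k₀ : ℝ) (hb : b ≠ 0) :
    ∃ y k : ℝ → ℝ,
      (y t₀ = y₀ ∧ k t₀ = k₀ ∧
        (∀ t ≥ t₀, HasDerivAt y ((a - b * k t) * y t) t) ∧
        (∀ t ≥ t₀, HasDerivAt k (b * (y t) ^ 2) t)) ∧
      (∀ y' k' : ℝ → ℝ,
        (y' t₀ = y₀ ∧ k' t₀ = k₀ ∧
          (∀ t ≥ t₀, HasDerivAt y' ((a - b * k' t) * y' t) t) ∧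
          (∀ t ≥ t₀, HasDerivAt k' (b * (y' t) ^ 2) t)) →
        ∀ t ≥ t₀, y' t = y t ∧ k' t = k t) := by
  obtain ⟨y, k, hy0, hk0, hy', hk'⟩ := exists_sol a b t₀ y₀ k₀ hb
  obtain ⟨r, hr0, hr2⟩ : ∃ r : ℝ, 0 ≤ r ∧ r ^ 2 = y₀ ^ 2 + (k₀ - a / b) ^ 2 :=
    ⟨Real.sqrt (y₀ ^ 2 + (k₀ - a / b) ^ 2), Real.sqrt_nonneg _,
      Real.sq_sqrt (by positivity)⟩
  have memball : ∀ f g : ℝ → ℝ, f t₀ = y₀ → g t₀ = k₀ →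
      (∀ t ≥ t₀, HasDerivAt f ((a - b * g t) * f t) t) →
      (∀ t ≥ t₀, HasDerivAt g (b * (f t) ^ 2) t) →
      ∀ s ≥ t₀, (f s, g s) ∈ Metric.closedBall ((0 : ℝ), a / b) r := by
    intro f g hf0 hg0 hf hg s hs
    have hcons := conserved_aux a b t₀ hb f g hf hg s hs
    rw [hf0, hg0] at hcons
    rw [Metric.mem_closedBall, Prod.dist_eq, Real.dist_eq, Real.dist_eq, sub_zero]
    have h1 : f s ^ 2 + (g s - a / b) ^ 2 = r ^ 2 := by rw [hcons, hr2]
    apply max_le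
    · rw [abs_le]
      constructor <;>
        nlinarith [sq_nonneg (g s - a / b), sq_nonneg (f s - r), sq_nonneg (f s + r)]
    · rw [abs_le]
      constructor <;>
        nlinarith [sq_nonneg (f s), sq_nonneg (g s - a / b - r), sq_nonneg (g s - a / b + r)]
  refine ⟨y, k, ⟨hy0, hk0, fun t _ => hy' t, fun t _ => hk' t⟩, ?_⟩
  rintro y' k' ⟨hy0', hk0', hy1', hk1'⟩ t ht
  have heq : (fun s => (y' s, k' s)) t = (fun s => (y s, k s)) t := by
    refine ODE_solution_unique_of_mem_Icc_right
      (v := fun _ p => ((a - b * p.2) * p.1, b * p.1 ^ 2))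
      (s := fun _ => Metric.closedBall ((0 : ℝ), a / b) r)
      (f := fun s => (y' s, k' s)) (g := fun s => (y s, k s))
      (fun _ _ => lip_aux a b r hr0) ?_ ?_ ?_ ?_ ?_ ?_ ?_ (Set.right_mem_Icc.2 ht)
    · exact fun s hs =>
        (((hy1' s hs.1).continuousAt).prodMk ((hk1' s hs.1).continuousAt)).continuousWithinAt
    · exact fun s hs => ((hy1' s hs.1).prodMk (hk1' s hs.1)).hasDerivWithinAt
    · exact fun s hs => memball y' k' hy0' hk0' hy1' hk1' s hs.1
    · exact fun s hs =>
        (((hy' s).continuousAt).prodMk ((hk' s).continuousAt)).continuousWithinAt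
    · exact fun s hs => ((hy' s).prodMk (hk' s)).hasDerivWithinAt
    · exact fun s hs =>
        memball y k hy0 hk0 (fun u _ => hy' u) (fun u _ => hk' u) s hs.1
    · show (y' t₀, k' t₀) = (y t₀, k t₀)
      rw [hy0', hk0', hy0, hk0]
  exact Prod.ext_iff.1 heq
end

section
/- Suppose b > 0 and let (y(t), k(t)) be a global solution of ẏ = (a - b·k)·y, k̇ = b·y² with y(t₀) ≠ 0. Then lim_{t→∞} k(t) exists and satisfies a/b < lim_{t→∞} k(t); in particular a - b·k(t) is eventually negative. -/
open Set Filter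

lemma mono_aux_k {f f' : ℝ → ℝ} {T : ℝ} (hf : ∀ t ≥ T, HasDerivAt f (f' t) t)
    (h0 : ∀ t ≥ T, 0 ≤ f' t) : MonotoneOn f (Set.Ici T) := by
  apply monotoneOn_of_deriv_nonneg (convex_Ici T)
  · exact fun t ht => (hf t ht).continuousAt.continuousWithinAt
  · intro t ht
    rw [interior_Ici] at ht
    exact (hf t ht.le).differentiableAt.differentiableWithinAt
  · intro t ht
    rw [interior_Ici] at ht
    rw [(hf t ht.le).deriv]
    exact h0 t ht.le

theorem k_limit_above (a b t₀ : ℝ) (hb : 0 < b)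
    (y k : ℝ → ℝ)
    (hy : ∀ t ≥ t₀, HasDerivAt y ((a - b * k t) * y t) t)
    (hk : ∀ t ≥ t₀, HasDerivAt k (b * (y t) ^ 2) t)
    (hy0 : y t₀ ≠ 0) :
    ∃ L : ℝ, Filter.Tendsto k Filter.atTop (nhds L) ∧ a / b < L ∧
      ∃ T ≥ t₀, ∀ t ≥ T, a - b * k t < 0 := by
  set c : ℝ := a / b with hc
  set d2 : ℝ := y t₀ ^ 2 + (k t₀ - c) ^ 2 with hd2
  have hbne : b ≠ 0 := hb.ne'
  -- conservation law
  have hE : ∀ t ≥ t₀, HasDerivAt (fun s => y s ^ 2 + (k s - c) ^ 2) 0 t := by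
    intro t ht
    have h1 := (hy t ht).pow 2
    have h2 := ((hk t ht).sub_const c).pow 2
    have h := h1.add h2
    have key : b * c = a := by rw [hc]; field_simp
    exact h.congr_deriv (by push_cast; linear_combination (-2 * y t ^ 2) * key)
  have hcons : ∀ t ≥ t₀, y t ^ 2 + (k t - c) ^ 2 = d2 := by
    intro t ht
    have hmono := mono_aux_k hE (fun t _ => le_refl 0)
    have hanti := mono_aux_k (f' := fun _ => (0:ℝ))
      (f := fun s => -(y s ^ 2 + (k s - c) ^ 2))
      (fun t ht => by have h' := (hE t ht).neg; rw [neg_zero] at h'; exact h') (fun t _ => le_refl 0)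
    have h1 := hmono (Set.mem_Ici.mpr le_rfl) ht ht
    have h2 := hanti (Set.mem_Ici.mpr le_rfl) ht ht
    simp only [neg_le_neg_iff] at h2
    exact le_antisymm h2 h1
  have hcirc : ∀ t ≥ t₀, (k t - c) ^ 2 ≤ d2 := fun t ht => by
    nlinarith [hcons t ht, sq_nonneg (y t)]
  -- k monotone on [t₀, ∞)
  have hkmono : MonotoneOn k (Set.Ici t₀) :=
    mono_aux_k hk (fun t _ => by positivity)
  -- bound
  have hbound : ∀ t ≥ t₀, k t ≤ c + Real.sqrt d2 := by
    intro t ht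
    have h := hcirc t ht
    have : k t - c ≤ Real.sqrt d2 := by
      calc k t - c ≤ |k t - c| := le_abs_self _
        _ = Real.sqrt ((k t - c) ^ 2) := (Real.sqrt_sq_eq_abs _).symm
        _ ≤ Real.sqrt d2 := Real.sqrt_le_sqrt h
    linarith
  -- monotone bounded extension
  set g : ℝ → ℝ := fun t => k (max t t₀) with hg
  have hgmono : Monotone g := fun s t h =>
    hkmono (Set.mem_Ici.mpr (le_max_right _ _)) (Set.mem_Ici.mpr (le_max_right _ _)) (max_le_max h le_rfl)
  have hbdd : BddAbove (Set.range g) := by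
    refine ⟨c + Real.sqrt d2, ?_⟩
    rintro _ ⟨t, rfl⟩
    exact hbound _ (le_max_right _ _)
  set L : ℝ := ⨆ t, g t with hL
  have hgL : Tendsto g atTop (nhds L) := tendsto_atTop_ciSup hgmono hbdd
  have heq : g =ᶠ[atTop] k := by
    filter_upwards [eventually_ge_atTop t₀] with t ht
    simp [hg, max_eq_left ht]
  have hkL : Tendsto k atTop (nhds L) := hgL.congr' heq
  have hle : ∀ t ≥ t₀, k t ≤ L := by
    intro t ht
    have : g t ≤ L := le_ciSup hbdd t
    simpa [hg, max_eq_left ht] using this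
  -- (L - c)^2 ≤ d2
  have htend2 : Tendsto (fun t => (k t - c) ^ 2) atTop (nhds ((L - c) ^ 2)) :=
    (hkL.sub_const c).pow 2
  have hLle : (L - c) ^ 2 ≤ d2 :=
    le_of_tendsto htend2 (by filter_upwards [eventually_ge_atTop t₀] with t ht using hcirc t ht)
  -- (L - c)^2 ≥ d2 by the growth argument
  have hLge : d2 ≤ (L - c) ^ 2 := by
    by_contra hlt
    push_neg at hlt
    set ε : ℝ := (d2 - (L - c) ^ 2) / 2 with hε
    have hεpos : 0 < ε := by simp only [hε]; linarith
    have hev : ∀ᶠ t in atTop, (k t - c) ^ 2 < (L - c) ^ 2 + ε :=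
      htend2.eventually (gt_mem_nhds (by linarith))
    obtain ⟨T, hT⟩ := (hev.and (eventually_ge_atTop t₀)).exists_forall_of_atTop
    have hT0 : T ≥ t₀ := (hT T le_rfl).2
    have hylb : ∀ t ≥ T, ε ≤ y t ^ 2 := by
      intro t ht
      have h1 := (hT t ht).1
      have h2 := hcons t ((hT t ht).2)
      simp only [hε] at h1 h2 ⊢
      nlinarith
    have hmono2 : MonotoneOn (fun s => k s - b * ε * s) (Set.Ici T) := by
      apply mono_aux_k (f' := fun t => b * y t ^ 2 - b * ε)
      · intro t ht
        exact (hk t (hT0.trans ht)).sub (by simpa using (hasDerivAt_id t).const_mul (b * ε))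
      · intro t ht
        have := hylb t ht
        nlinarith
    set t₁ : ℝ := T + (L - k T) / (b * ε) + 1 with ht₁
    have hkTL : k T ≤ L := hle T hT0
    have hbε : 0 < b * ε := by positivity
    have ht₁T : T ≤ t₁ := by
      have : 0 ≤ (L - k T) / (b * ε) := div_nonneg (by linarith) hbε.le
      simp only [ht₁]; linarith
    have hgrow := hmono2 (Set.mem_Ici.mpr le_rfl) ht₁T ht₁T
    have hval : b * ε * (t₁ - T) = (L - k T) + b * ε := by
      have hx : b * ε * ((L - k T) / (b * ε)) = L - k T := by field_simp
      rw [ht₁]; linear_combination hx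
    have hkt₁ : k t₁ ≤ L := hle t₁ (hT0.trans ht₁T)
    simp only at hgrow
    nlinarith
  have hd2eq : (L - c) ^ 2 = d2 := le_antisymm hLle hLge
  -- L > c
  have hcL : c < L := by
    by_contra hle'
    push_neg at hle'
    have h1 : (k t₀ - c) ^ 2 ≤ (L - c) ^ 2 := hd2eq ▸ hcirc t₀ le_rfl
    have h2 : k t₀ ≤ L := hle t₀ le_rfl
    have h3 : L ≤ k t₀ := by nlinarith
    have h4 : k t₀ = L := le_antisymm h2 h3
    have h5 := hcons t₀ le_rfl
    have : y t₀ ^ 2 = 0 := by nlinarith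
    exact hy0 (by nlinarith)
  refine ⟨L, hkL, hcL, ?_⟩
  have hev : ∀ᶠ t in atTop, c < k t := hkL.eventually (lt_mem_nhds hcL)
  obtain ⟨T, hT⟩ := (hev.and (eventually_ge_atTop t₀)).exists_forall_of_atTop
  refine ⟨T, (hT T le_rfl).2, fun t ht => ?_⟩
  have h1 := (hT t ht).1
  have : a < b * k t := by
    have := (div_lt_iff₀ hb).mp (hc ▸ h1)
    linarith
  linarith
end
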